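/- arXiv:0808.0301 — 2 statements merged into one kernel-verified Lean document; each statement's English description precedes it below -/
import Mathlib

section
/- If a conjugacy φ : X₁ → X₂ between one-sided shift spaces exists (a homeomorphism with φ∘σ_{X₁} = σ_{X₂}∘φ), then the *-isomorphism Φ : l∞(X₁) → l∞(X₂) given by Φ(f) = f∘φ⁻¹ satisfies Φ(C(X₁)) = C(X₂), Φ∘α_{X₁} = α_{X₂}∘Φ, Φ∘L_{X₁} = L_{X₂}∘Φ, and Φ(D_{X₁}) = D_{X₂}. -/
open scoped ENNReal
open Classical
set_option linter.unusedSectionVars false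
set_option synthInstance.maxHeartbeats 1000000
set_option maxHeartbeats 1000000

noncomputable section

variable {𝔞 : Type*} [Fintype 𝔞] [Nonempty 𝔞] [TopologicalSpace 𝔞] [DiscreteTopology 𝔞]

/-- The one-sided shift map on the full one-sided shift `𝔞^ℕ`. -/
def shift (x : ℕ → 𝔞) : ℕ → 𝔞 := fun n => x (n + 1)

/-- Concatenation `u x` of a finite word `u` with an infinite sequence `x`. -/
def wcat (u : List 𝔞) (x : ℕ → 𝔞) : ℕ → 𝔞 := fun n =>
  if h : n < u.length then u.get ⟨n, h⟩ else x (n - u.length)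

/-- `l∞(X)`: the C*-algebra of bounded complex-valued functions on `X`,
with pointwise operations and the supremum norm. -/
abbrev Linf (X : Set (ℕ → 𝔞)) : Type _ := lp (fun _ : X => ℂ) ∞

/-- The set `C(u,v) = {vx : x ∈ X, vx ∈ X, ux ∈ X}`. -/
def cyl (X : Set (ℕ → 𝔞)) (u v : List 𝔞) : Set (ℕ → 𝔞) :=
  {y | ∃ x, x ∈ X ∧ wcat u x ∈ X ∧ wcat v x ∈ X ∧ y = wcat v x}

/-- The indicator function of a subset `S`, as an element of `l∞(X)`. -/
def chi (X S : Set (ℕ → 𝔞)) : Linf X :=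
  ⟨fun x => S.indicator (fun _ => (1 : ℂ)) (x : ℕ → 𝔞),
    memℓp_infty ⟨1, by
      rintro r ⟨x, rfl⟩
      by_cases h : (x : ℕ → 𝔞) ∈ S <;> simp [Set.indicator_apply, h]⟩⟩

/-- `D_X`: the smallest C*-subalgebra (norm-closed, star-closed subalgebra) of `l∞(X)`
containing the indicator functions `χ_{C(u,v)}` for all words `u, v`. -/
def Dalg (X : Set (ℕ → 𝔞)) : NonUnitalStarSubalgebra ℂ (Linf X) :=
  (NonUnitalStarAlgebra.adjoin ℂ
    {f : Linf X | ∃ u v : List 𝔞, f = chi X (cyl X u v)}).topologicalClosure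

lemma chi_cyl_mem_Dalg (X : Set (ℕ → 𝔞)) (u v : List 𝔞) : chi X (cyl X u v) ∈ Dalg X :=
  (NonUnitalStarAlgebra.adjoin ℂ _).le_topologicalClosure
    (NonUnitalStarAlgebra.subset_adjoin ℂ _ ⟨u, v, rfl⟩)

/-- The map `α : l∞(X) → l∞(X)`, `α(f)(x) = f(σ x)`. -/
def alphaMap (X : Set (ℕ → 𝔞)) (hX : ∀ x ∈ X, shift x ∈ X) (f : Linf X) : Linf X :=
  ⟨fun x => f ⟨shift (x : ℕ → 𝔞), hX _ x.2⟩,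
    memℓp_infty ⟨‖f‖, by
      rintro r ⟨x, rfl⟩
      exact lp.norm_apply_le_norm ENNReal.top_ne_zero f _⟩⟩

/-- The set `σ⁻¹({x})` of preimages of `x` in `X` under the shift. -/
def preims (X : Set (ℕ → 𝔞)) (x : ℕ → 𝔞) : Set X :=
  {y : X | shift (y : ℕ → 𝔞) = x}

lemma preims_finite (X : Set (ℕ → 𝔞)) (x : ℕ → 𝔞) : (preims X x).Finite := by
  apply Set.Finite.of_finite_image (f := fun y : X => (y : ℕ → 𝔞) 0) (Set.toFinite _)
  intro y hy z hz h
  apply Subtype.ext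
  funext n
  cases n with
  | zero => exact h
  | succ m =>
    have hy' : shift (y : ℕ → 𝔞) = x := hy
    have hz' : shift (z : ℕ → 𝔞) = x := hz
    exact congrFun (hy'.trans hz'.symm) m

lemma aux_norm_le (X : Set (ℕ → 𝔞)) (f : Linf X) (S : Set X) (hS : S.Finite) :
    ‖((S.ncard : ℂ))⁻¹ * ∑ᶠ y ∈ S, f y‖ ≤ ‖f‖ := by
  rw [finsum_mem_eq_finite_toFinset_sum _ hS]
  have hcard : S.ncard = hS.toFinset.card := Set.ncard_eq_toFinset_card _ hS
  rcases Nat.eq_zero_or_pos hS.toFinset.card with h0 | hpos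
  · have he : hS.toFinset = ∅ := Finset.card_eq_zero.mp h0
    rw [he]
    simp only [Finset.sum_empty, mul_zero, norm_zero]
    exact norm_nonneg f
  · have hb : ‖∑ y ∈ hS.toFinset, (f : ∀ _ : X, ℂ) y‖ ≤ (hS.toFinset.card : ℝ) * ‖f‖ := by
      calc ‖∑ y ∈ hS.toFinset, (f : ∀ _ : X, ℂ) y‖ ≤ ∑ y ∈ hS.toFinset, ‖(f : ∀ _ : X, ℂ) y‖ :=
            norm_sum_le _ _
      _ ≤ hS.toFinset.card • ‖f‖ := Finset.sum_le_card_nsmul _ _ _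
            (fun y _ => lp.norm_apply_le_norm ENNReal.top_ne_zero f y)
      _ = (hS.toFinset.card : ℝ) * ‖f‖ := nsmul_eq_mul _ _
    have hno : ‖((S.ncard : ℂ))⁻¹‖ = ((hS.toFinset.card : ℝ))⁻¹ := by
      rw [norm_inv, hcard]
      norm_num
    calc ‖((S.ncard : ℂ))⁻¹ * ∑ y ∈ hS.toFinset, (f : ∀ _ : X, ℂ) y‖
        = ((hS.toFinset.card : ℝ))⁻¹ * ‖∑ y ∈ hS.toFinset, (f : ∀ _ : X, ℂ) y‖ := by
          rw [norm_mul, hno]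
    _ ≤ ((hS.toFinset.card : ℝ))⁻¹ * ((hS.toFinset.card : ℝ) * ‖f‖) := by
          apply mul_le_mul_of_nonneg_left hb
          positivity
    _ = ‖f‖ := by
          rw [← mul_assoc, inv_mul_cancel₀ (by positivity), one_mul]

/-- The transfer operator `L : l∞(X) → l∞(X)`:
`L(f)(x)` is the average of `f` over `σ⁻¹({x})` if `x ∈ σ(X)`, and `0` otherwise. -/
def Lmap (X : Set (ℕ → 𝔞)) (f : Linf X) : Linf X :=
  ⟨fun x => if (x : ℕ → 𝔞) ∈ shift '' X then
      (((preims X (x : ℕ → 𝔞)).ncard : ℂ))⁻¹ * ∑ᶠ y ∈ preims X (x : ℕ → 𝔞), f y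
    else 0,
    memℓp_infty ⟨‖f‖, by
      rintro r ⟨x, rfl⟩
      dsimp only
      split_ifs with h
      · exact aux_norm_le X f _ (preims_finite X _)
      · rw [norm_zero]; exact norm_nonneg f⟩⟩

/-- Transport of bounded functions along a homeomorphism: `Φ(f) = f ∘ φ⁻¹`. -/
def transport {𝔟 : Type*} [TopologicalSpace 𝔟] {X : Set (ℕ → 𝔞)} {Y : Set (ℕ → 𝔟)}
    (e : X ≃ₜ Y) (f : Linf X) : Linf Y :=
  ⟨fun y => f (e.symm y),
    memℓp_infty ⟨‖f‖, by
      rintro r ⟨y, rfl⟩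
      exact lp.norm_apply_le_norm ENNReal.top_ne_zero f _⟩⟩

section Basics

variable {𝔞 : Type*} [Fintype 𝔞] [Nonempty 𝔞] [TopologicalSpace 𝔞] [DiscreteTopology 𝔞]

lemma wcat_nil (x : ℕ → 𝔞) : wcat ([] : List 𝔞) x = x := by
  funext n; simp [wcat]

lemma shift_iterate_apply (x : ℕ → 𝔞) (k n : ℕ) : (shift^[k] x) n = x (n + k) := by
  induction k generalizing x with
  | zero => rfl
  | succ m ih =>
    rw [Function.iterate_succ_apply, ih (shift x)]
    rfl

lemma wcat_apply_lt (u : List 𝔞) (x : ℕ → 𝔞) {n : ℕ} (h : n < u.length) :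
    wcat u x n = u.get ⟨n, h⟩ := by simp [wcat, h]

lemma wcat_apply_ge (u : List 𝔞) (x : ℕ → 𝔞) {n : ℕ} (h : u.length ≤ n) :
    wcat u x n = x (n - u.length) := by
  have : ¬ n < u.length := not_lt.mpr h
  simp [wcat, this]

lemma shift_iterate_wcat (u : List 𝔞) (x : ℕ → 𝔞) : shift^[u.length] (wcat u x) = x := by
  funext n
  rw [shift_iterate_apply, wcat_apply_ge u x (Nat.le_add_left _ _)]
  simp

lemma shift_iterate_wcat_drop (u : List 𝔞) (x : ℕ → 𝔞) {k : ℕ} (hk : k ≤ u.length) :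
    shift^[k] (wcat u x) = wcat (u.drop k) x := by
  funext n
  rw [shift_iterate_apply]
  rcases lt_or_ge n (u.length - k) with h | h
  · have h1 : n + k < u.length := by omega
    have h2 : n < (u.drop k).length := by simp; omega
    rw [wcat_apply_lt u x h1, wcat_apply_lt _ x h2]
    simp [List.get_eq_getElem, List.getElem_drop]
    congr 1
    omega
  · have h1 : u.length ≤ n + k := by omega
    have h2 : (u.drop k).length ≤ n := by simp; omega
    rw [wcat_apply_ge u x h1, wcat_apply_ge _ x h2]
    congr 1
    simp
    omega

lemma wcat_cons_zero (b : 𝔞) (v : List 𝔞) (x : ℕ → 𝔞) : wcat (b :: v) x 0 = b := by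
  simp [wcat]

lemma shift_wcat_cons (b : 𝔞) (v : List 𝔞) (x : ℕ → 𝔞) :
    shift (wcat (b :: v) x) = wcat v x := by
  have := shift_iterate_wcat_drop (b :: v) x (k := 1) (by simp)
  simpa using this

lemma shift_mem_iter {X : Set (ℕ → 𝔞)} (hX : ∀ x ∈ X, shift x ∈ X) {x : ℕ → 𝔞}
    (hx : x ∈ X) (k : ℕ) : shift^[k] x ∈ X := by
  induction k with
  | zero => exact hx
  | succ m ih => rw [Function.iterate_succ_apply']; exact hX _ ih

lemma cyl_subset (X : Set (ℕ → 𝔞)) (u v : List 𝔞) : cyl X u v ⊆ X := by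
  rintro y ⟨x, _, _, hvx, rfl⟩; exact hvx

end Basics
section Transport

variable {𝔞 : Type*} [Fintype 𝔞] [Nonempty 𝔞] [TopologicalSpace 𝔞] [DiscreteTopology 𝔞]
variable {𝔟 : Type*} [Fintype 𝔟] [Nonempty 𝔟] [TopologicalSpace 𝔟] [DiscreteTopology 𝔟]
variable {X : Set (ℕ → 𝔞)} {Y : Set (ℕ → 𝔟)}

lemma transport_apply (e : X ≃ₜ Y) (f : Linf X) (y : Y) :
    transport e f y = f (e.symm y) := rfl

lemma transport_symm_transport (e : X ≃ₜ Y) (f : Linf X) :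
    transport e.symm (transport e f) = f := by
  apply lp.ext; funext x
  simp [transport_apply]

lemma transport_transport_symm (e : X ≃ₜ Y) (g : Linf Y) :
    transport e (transport e.symm g) = g := by
  apply lp.ext; funext y
  simp [transport_apply]

lemma transport_add (e : X ≃ₜ Y) (f g : Linf X) :
    transport e (f + g) = transport e f + transport e g := by
  apply lp.ext; funext y
  simp only [lp.coeFn_add, Pi.add_apply]
  rfl

lemma transport_sub (e : X ≃ₜ Y) (f g : Linf X) :
    transport e (f - g) = transport e f - transport e g := by
  apply lp.ext; funext y
  simp only [lp.coeFn_sub, Pi.sub_apply]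
  rfl

lemma transport_zero (e : X ≃ₜ Y) : transport e (0 : Linf X) = 0 := by
  apply lp.ext; funext y
  simp only [lp.coeFn_zero, Pi.zero_apply]
  rfl

lemma transport_smul (e : X ≃ₜ Y) (c : ℂ) (f : Linf X) :
    transport e (c • f) = c • transport e f := by
  apply lp.ext; funext y
  simp only [lp.coeFn_smul, Pi.smul_apply]
  rfl

lemma transport_mul (e : X ≃ₜ Y) (f g : Linf X) :
    transport e (f * g) = transport e f * transport e g := by
  apply lp.ext; funext y
  simp only [lp.infty_coeFn_mul, Pi.mul_apply]
  rfl

lemma transport_star (e : X ≃ₜ Y) (f : Linf X) :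
    transport e (star f) = star (transport e f) := by
  apply lp.ext; funext y
  simp only [lp.coeFn_star, Pi.star_apply]
  rfl

lemma norm_transport_le (e : X ≃ₜ Y) (f : Linf X) : ‖transport e f‖ ≤ ‖f‖ :=
  lp.norm_le_of_forall_le (norm_nonneg f) fun y =>
    lp.norm_apply_le_norm ENNReal.top_ne_zero f (e.symm y)

lemma norm_transport (e : X ≃ₜ Y) (f : Linf X) : ‖transport e f‖ = ‖f‖ := by
  refine le_antisymm (norm_transport_le e f) ?_
  have := norm_transport_le e.symm (transport e f)
  rwa [transport_symm_transport] at this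

lemma continuous_transport (e : X ≃ₜ Y) : Continuous (transport e : Linf X → Linf Y) := by
  have : Isometry (transport e : Linf X → Linf Y) := by
    intro f g
    rw [edist_dist, edist_dist, dist_eq_norm, dist_eq_norm, ← transport_sub, norm_transport]
  exact this.continuous

lemma bijective_transport (e : X ≃ₜ Y) : Function.Bijective (transport e : Linf X → Linf Y) := by
  constructor
  · intro f g h
    have := congrArg (transport e.symm) h
    rwa [transport_symm_transport, transport_symm_transport] at this
  · intro g
    exact ⟨transport e.symm g, transport_transport_symm e g⟩

end Transport

section Chi

variable {𝔞 : Type*} [Fintype 𝔞] [Nonempty 𝔞] [TopologicalSpace 𝔞] [DiscreteTopology 𝔞]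
variable {X : Set (ℕ → 𝔞)}

lemma chi_apply (S : Set (ℕ → 𝔞)) (x : X) :
    chi X S x = S.indicator (fun _ => (1 : ℂ)) (x : ℕ → 𝔞) := rfl

lemma chi_inter (S T : Set (ℕ → 𝔞)) : chi X (S ∩ T) = chi X S * chi X T := by
  apply lp.ext; funext x
  rw [lp.infty_coeFn_mul, Pi.mul_apply, chi_apply, chi_apply, chi_apply]
  by_cases hS : (x : ℕ → 𝔞) ∈ S <;> by_cases hT : (x : ℕ → 𝔞) ∈ T <;>
    simp [Set.indicator_apply, hS, hT]

lemma chi_union (S T : Set (ℕ → 𝔞)) :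
    chi X (S ∪ T) = chi X S + chi X T - chi X (S ∩ T) := by
  apply lp.ext; funext x
  rw [lp.coeFn_sub, Pi.sub_apply, lp.coeFn_add, Pi.add_apply,
    chi_apply, chi_apply, chi_apply, chi_apply]
  by_cases hS : (x : ℕ → 𝔞) ∈ S <;> by_cases hT : (x : ℕ → 𝔞) ∈ T <;>
    simp [Set.indicator_apply, hS, hT]

lemma chi_empty : chi X (∅ : Set (ℕ → 𝔞)) = 0 := by
  apply lp.ext; funext x
  rw [lp.coeFn_zero, Pi.zero_apply, chi_apply]
  simp

lemma chi_union_mem (S T : Set (ℕ → 𝔞)) (hS : chi X S ∈ Dalg X) (hT : chi X T ∈ Dalg X) :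
    chi X (S ∪ T) ∈ Dalg X := by
  rw [chi_union, chi_inter]
  exact sub_mem (add_mem hS hT) (mul_mem hS hT)

end Chi
section CylSets

variable {𝔞 : Type*} [Fintype 𝔞] [Nonempty 𝔞] [TopologicalSpace 𝔞] [DiscreteTopology 𝔞]
variable {X : Set (ℕ → 𝔞)}

/-- Membership in `C(ε,w)`: starts with `w` and lies in `X`. -/
lemma mem_cyl_nil_iff (hX : ∀ x ∈ X, shift x ∈ X) {w : List 𝔞} {z : ℕ → 𝔞} :
    z ∈ cyl X [] w ↔ z ∈ X ∧ ∀ (i : ℕ) (h : i < w.length), z i = w.get ⟨i, h⟩ := by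
  constructor
  · rintro ⟨x, hx, -, hwx, rfl⟩
    exact ⟨hwx, fun i h => wcat_apply_lt w x h⟩
  · rintro ⟨hz, hpre⟩
    refine ⟨shift^[w.length] z, shift_mem_iter hX hz _, ?_, ?_, ?_⟩
    · rw [wcat_nil]; exact shift_mem_iter hX hz _
    all_goals {
      have hzz : wcat w (shift^[w.length] z) = z := by
        funext n
        rcases lt_or_ge n w.length with h | h
        · rw [wcat_apply_lt w _ h, hpre n h]
        · rw [wcat_apply_ge w _ h, shift_iterate_apply]
          congr 1; omega
      first
        | (rw [hzz]; exact hz)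
        | (rw [hzz])
    }

/-- One-step shift preimage of a `C`-set. -/
lemma preimage_shift_cyl (hX : ∀ x ∈ X, shift x ∈ X) (u v : List 𝔞) :
    {y | y ∈ X ∧ shift y ∈ cyl X u v} = ⋃ b : 𝔞, cyl X u (b :: v) := by
  ext y
  simp only [Set.mem_setOf_eq, Set.mem_iUnion]
  constructor
  · rintro ⟨hy, x, hx, hux, hvx, hsy⟩
    refine ⟨y 0, x, hx, hux, ?_, ?_⟩
    · have : wcat (y 0 :: v) x = y := by
        funext n
        cases n with
        | zero => exact wcat_cons_zero _ _ _
        | succ m =>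
          have h1 : wcat (y 0 :: v) x (m + 1) = shift (wcat (y 0 :: v) x) m := rfl
          rw [h1, shift_wcat_cons, ← hsy]
          rfl
      rw [this]; exact hy
    · funext n
      cases n with
      | zero => rw [wcat_cons_zero]
      | succ m =>
        have h1 : wcat (y 0 :: v) x (m + 1) = shift (wcat (y 0 :: v) x) m := rfl
        rw [h1, shift_wcat_cons, ← hsy]
        rfl
  · rintro ⟨b, x, hx, hux, hbvx, rfl⟩
    refine ⟨hbvx, x, hx, hux, ?_, ?_⟩
    · rw [← shift_wcat_cons b v x]; exact hX _ hbvx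
    · rw [shift_wcat_cons]

/-- A finite union of `C`-sets. -/
def FinUnionC (X : Set (ℕ → 𝔞)) (S : Set (ℕ → 𝔞)) : Prop :=
  ∃ F : Finset (List 𝔞 × List 𝔞), S = ⋃ p ∈ F, cyl X p.1 p.2

lemma finUnionC_cyl (u v : List 𝔞) : FinUnionC X (cyl X u v) :=
  ⟨{(u, v)}, by simp⟩

lemma finUnionC_subset {S : Set (ℕ → 𝔞)} (h : FinUnionC X S) : S ⊆ X := by
  obtain ⟨F, rfl⟩ := h
  exact Set.iUnion₂_subset fun p _ => cyl_subset X _ _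

lemma finUnionC_iUnion {ι₀ : Type*} [Fintype ι₀] {S : ι₀ → Set (ℕ → 𝔞)}
    (h : ∀ i, FinUnionC X (S i)) : FinUnionC X (⋃ i, S i) := by
  choose F hF using h
  refine ⟨Finset.univ.biUnion F, ?_⟩
  ext y
  simp only [Set.mem_iUnion]
  constructor
  · rintro ⟨i, hy⟩
    rw [hF i] at hy
    rw [Set.mem_iUnion₂] at hy
    obtain ⟨p, hp, hyp⟩ := hy
    exact ⟨p, Finset.mem_biUnion.mpr ⟨i, Finset.mem_univ i, hp⟩, hyp⟩
  · rintro ⟨p, hp, hyp⟩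
    obtain ⟨i, -, hpi⟩ := Finset.mem_biUnion.mp hp
    refine ⟨i, ?_⟩
    rw [hF i, Set.mem_iUnion₂]
    exact ⟨p, hpi, hyp⟩

/-- Iterated shift preimage (within `X`) of a finite union of `C`-sets. -/
lemma finUnionC_preimage (hX : ∀ x ∈ X, shift x ∈ X) {S : Set (ℕ → 𝔞)} (h : FinUnionC X S) (k : ℕ) :
    FinUnionC X {y | y ∈ X ∧ shift^[k] y ∈ S} := by
  induction k generalizing S with
  | zero =>
    have : {y | y ∈ X ∧ shift^[0] y ∈ S} = S := by
      ext y
      simp only [Function.iterate_zero, id_eq, Set.mem_setOf_eq]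
      exact ⟨fun h' => h'.2, fun hy => ⟨finUnionC_subset h hy, hy⟩⟩
    rwa [this]
  | succ m ih =>
    have inner : FinUnionC X {z | z ∈ X ∧ shift^[m] z ∈ S} := ih h
    obtain ⟨G, hd⟩ := inner
    have key : {y | y ∈ X ∧ shift^[m + 1] y ∈ S}
        = ⋃ p : G, {y | y ∈ X ∧ shift y ∈ cyl X (p : List 𝔞 × List 𝔞).1
            (p : List 𝔞 × List 𝔞).2} := by
      have h1 : {y | y ∈ X ∧ shift^[m + 1] y ∈ S}
          = {y | y ∈ X ∧ shift y ∈ {z | z ∈ X ∧ shift^[m] z ∈ S}} := by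
        ext y
        simp only [Set.mem_setOf_eq]
        constructor
        · rintro ⟨hy, hs⟩
          exact ⟨hy, hX y hy, by rwa [← Function.iterate_succ_apply]⟩
        · rintro ⟨hy, -, hs⟩
          exact ⟨hy, by rwa [Function.iterate_succ_apply]⟩
      rw [h1, hd]
      ext y
      simp only [Set.mem_setOf_eq, Set.mem_iUnion, Set.mem_iUnion₂]
      constructor
      · rintro ⟨hy, p, hp, hyp⟩
        exact ⟨⟨p, hp⟩, hy, hyp⟩
      · rintro ⟨⟨p, hp⟩, hy, hyp⟩
        exact ⟨hy, p, hp, hyp⟩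
    rw [key]
    refine finUnionC_iUnion fun p => ?_
    rw [preimage_shift_cyl hX _ _]
    exact finUnionC_iUnion fun b =>
      finUnionC_cyl (X := X) (p : List 𝔞 × List 𝔞).1 (b :: (p : List 𝔞 × List 𝔞).2)

/-- Shift image of an initial cylinder. -/
lemma image_shift_cyl_nil (hX : ∀ x ∈ X, shift x ∈ X) {w : List 𝔞} {k : ℕ} (hk : k ≤ w.length) :
    shift^[k] '' (cyl X [] w) = cyl X w (w.drop k) := by
  ext z
  constructor
  · rintro ⟨y, ⟨x, hx, -, hwx, rfl⟩, rfl⟩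
    rw [shift_iterate_wcat_drop w x hk]
    exact ⟨x, hx, hwx, by
      rw [← shift_iterate_wcat_drop w x hk]
      exact shift_mem_iter hX hwx k, rfl⟩
  · rintro ⟨x, hx, hwx, hdx, rfl⟩
    exact ⟨wcat w x, ⟨x, hx, by rw [wcat_nil]; exact hx, hwx, rfl⟩,
      shift_iterate_wcat_drop w x hk⟩

lemma chi_mem_Dalg_of_finUnionC {S : Set (ℕ → 𝔞)} (h : FinUnionC X S) :
    chi X S ∈ Dalg X := by
  obtain ⟨F, rfl⟩ := h
  induction F using Finset.induction_on with
  | empty =>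
    rw [show (⋃ p ∈ (∅ : Finset (List 𝔞 × List 𝔞)), cyl X p.1 p.2) = (∅ : Set (ℕ → 𝔞))
      by simp, chi_empty]
    exact zero_mem (Dalg X)
  | insert _ _ hnot ih =>
    rw [Finset.set_biUnion_insert]
    exact chi_union_mem _ _ (chi_cyl_mem_Dalg X _ _) ih

end CylSets
section Conj

variable {𝔞 : Type*} [Fintype 𝔞] [Nonempty 𝔞] [TopologicalSpace 𝔞] [DiscreteTopology 𝔞]
variable {𝔟 : Type*} [Fintype 𝔟] [Nonempty 𝔟] [TopologicalSpace 𝔟] [DiscreteTopology 𝔟]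
variable {X : Set (ℕ → 𝔞)} {Y : Set (ℕ → 𝔟)}

/-- The image of a subset of `X` under the conjugacy, as a set of sequences. -/
def phiSet (e : X ≃ₜ Y) (S : Set (ℕ → 𝔞)) : Set (ℕ → 𝔟) :=
  Subtype.val '' (e '' (Subtype.val ⁻¹' S))

lemma phiSet_subset (e : X ≃ₜ Y) (S : Set (ℕ → 𝔞)) : phiSet e S ⊆ Y := by
  rintro z ⟨w, -, rfl⟩
  exact w.2

lemma mem_phiSet_iff' (e : X ≃ₜ Y) (S : Set (ℕ → 𝔞)) (z : ℕ → 𝔟) :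
    z ∈ phiSet e S ↔ ∃ x : X, (x : ℕ → 𝔞) ∈ S ∧ ((e x : Y) : ℕ → 𝔟) = z := by
  constructor
  · rintro ⟨w, ⟨x, hxS, rfl⟩, rfl⟩
    exact ⟨x, hxS, rfl⟩
  · rintro ⟨x, hxS, rfl⟩
    exact ⟨e x, ⟨x, hxS, rfl⟩, rfl⟩

lemma mem_phiSet_iff (e : X ≃ₜ Y) (S : Set (ℕ → 𝔞)) (y : Y) :
    (y : ℕ → 𝔟) ∈ phiSet e S ↔ ((e.symm y : X) : ℕ → 𝔞) ∈ S := by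
  rw [mem_phiSet_iff']
  constructor
  · rintro ⟨x, hxS, hxy⟩
    have : e x = y := Subtype.ext hxy
    rwa [← this, Homeomorph.symm_apply_apply]
  · intro h
    exact ⟨e.symm y, h, by rw [Homeomorph.apply_symm_apply]⟩

lemma transport_chi (e : X ≃ₜ Y) (S : Set (ℕ → 𝔞)) :
    transport e (chi X S) = chi Y (phiSet e S) := by
  apply lp.ext; funext y
  rw [transport_apply, chi_apply, chi_apply]
  by_cases h : ((e.symm y : X) : ℕ → 𝔞) ∈ S
  · rw [Set.indicator_of_mem h, Set.indicator_of_mem ((mem_phiSet_iff e S y).mpr h)]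
  · rw [Set.indicator_of_notMem h,
      Set.indicator_of_notMem (fun hc => h ((mem_phiSet_iff e S y).mp hc))]

variable (hXinv : ∀ x ∈ X, shift x ∈ X) (hYinv : ∀ y ∈ Y, shift y ∈ Y)

lemma hconj_iter {e : X ≃ₜ Y} (hXinv : ∀ x ∈ X, shift x ∈ X)
    (hconj : ∀ x : X, ((e ⟨shift (x : ℕ → 𝔞), hXinv _ x.2⟩ : Y) : ℕ → 𝔟)
      = shift ((e x : Y) : ℕ → 𝔟)) (k : ℕ) (x : X) :
    shift^[k] ((e x : Y) : ℕ → 𝔟)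
      = ((e ⟨shift^[k] (x : ℕ → 𝔞), shift_mem_iter hXinv x.2 k⟩ : Y) : ℕ → 𝔟) := by
  induction k generalizing x with
  | zero => rfl
  | succ m ih =>
    rw [Function.iterate_succ_apply, ← hconj x, ih ⟨shift (x : ℕ → 𝔞), hXinv _ x.2⟩]
    exact congrArg (fun z => ((e z : Y) : ℕ → 𝔟))
      (Subtype.ext (Function.iterate_succ_apply shift m (x : ℕ → 𝔞)).symm)

lemma hconj_symm {e : X ≃ₜ Y} (hXinv : ∀ x ∈ X, shift x ∈ X) (hYinv : ∀ y ∈ Y, shift y ∈ Y)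
    (hconj : ∀ x : X, ((e ⟨shift (x : ℕ → 𝔞), hXinv _ x.2⟩ : Y) : ℕ → 𝔟)
      = shift ((e x : Y) : ℕ → 𝔟)) (y : Y) :
    ((e.symm ⟨shift (y : ℕ → 𝔟), hYinv _ y.2⟩ : X) : ℕ → 𝔞)
      = shift ((e.symm y : X) : ℕ → 𝔞) := by
  have h1 : e ⟨shift ((e.symm y : X) : ℕ → 𝔞), hXinv _ (e.symm y).2⟩
      = ⟨shift (y : ℕ → 𝔟), hYinv _ y.2⟩ := by
    apply Subtype.ext
    rw [hconj (e.symm y), e.apply_symm_apply]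
  rw [← h1, Homeomorph.symm_apply_apply]

end Conj
section PhiCyl

variable {𝔞 : Type*} [Fintype 𝔞] [Nonempty 𝔞] [TopologicalSpace 𝔞] [DiscreteTopology 𝔞]
variable {𝔟 : Type*} [Fintype 𝔟] [Nonempty 𝔟] [TopologicalSpace 𝔟] [DiscreteTopology 𝔟]
variable {X : Set (ℕ → 𝔞)} {Y : Set (ℕ → 𝔟)}

lemma phiSet_cyl {e : X ≃ₜ Y} (hXinv : ∀ x ∈ X, shift x ∈ X)
    (hconj : ∀ x : X, ((e ⟨shift (x : ℕ → 𝔞), hXinv _ x.2⟩ : Y) : ℕ → 𝔟)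
      = shift ((e x : Y) : ℕ → 𝔟)) (u v : List 𝔞) :
    phiSet e (cyl X u v) = phiSet e (cyl X [] v) ∩
      {y | y ∈ Y ∧ shift^[v.length] y ∈ shift^[u.length] '' phiSet e (cyl X [] u)} := by
  ext z
  constructor
  · intro hz
    rw [mem_phiSet_iff'] at hz
    obtain ⟨x0, hx0, rfl⟩ := hz
    obtain ⟨x, hx, hux, hvx, hx0v⟩ := hx0
    have hnil : ∀ w : List 𝔞, wcat w x ∈ X → (wcat w x) ∈ cyl X [] w := fun w hw =>
      ⟨x, hx, by rw [wcat_nil]; exact hx, hw, rfl⟩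
    refine ⟨(mem_phiSet_iff' e _ _).mpr ⟨x0, by rw [hx0v]; exact hnil v hvx, rfl⟩,
      (e x0).2, ?_⟩
    rw [hconj_iter hXinv hconj v.length x0]
    refine ⟨((e ⟨wcat u x, hux⟩ : Y) : ℕ → 𝔟), ?_, ?_⟩
    · exact (mem_phiSet_iff' e _ _).mpr ⟨⟨wcat u x, hux⟩, hnil u hux, rfl⟩
    · rw [hconj_iter hXinv hconj u.length ⟨wcat u x, hux⟩]
      refine congrArg (fun w => ((e w : Y) : ℕ → 𝔟)) (Subtype.ext ?_)
      show shift^[u.length] (wcat u x) = shift^[v.length] (x0 : ℕ → 𝔞)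
      rw [shift_iterate_wcat, hx0v, shift_iterate_wcat]
  · rintro ⟨hz1, hzY, t, ht, hts⟩
    rw [mem_phiSet_iff'] at hz1 ht
    obtain ⟨x0, hx0, rfl⟩ := hz1
    obtain ⟨x, hx, -, hvx, hx0v⟩ := hx0
    obtain ⟨w, hw, hwt⟩ := ht
    obtain ⟨x', hx', -, hux', hwu⟩ := hw
    -- identify x and x'
    have h1 : shift^[v.length] ((e x0 : Y) : ℕ → 𝔟)
        = ((e ⟨x, hx⟩ : Y) : ℕ → 𝔟) := by
      rw [hconj_iter hXinv hconj v.length x0]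
      refine congrArg (fun w => ((e w : Y) : ℕ → 𝔟)) (Subtype.ext ?_)
      show shift^[v.length] (x0 : ℕ → 𝔞) = x
      rw [hx0v, shift_iterate_wcat]
    have h2 : shift^[u.length] ((e w : Y) : ℕ → 𝔟)
        = ((e ⟨x', hx'⟩ : Y) : ℕ → 𝔟) := by
      rw [hconj_iter hXinv hconj u.length w]
      refine congrArg (fun w' => ((e w' : Y) : ℕ → 𝔟)) (Subtype.ext ?_)
      show shift^[u.length] (w : ℕ → 𝔞) = x'
      rw [hwu, shift_iterate_wcat]
    have hxx : x = x' := by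
      have hcomb : shift^[u.length] ((e w : Y) : ℕ → 𝔟)
          = shift^[v.length] ((e x0 : Y) : ℕ → 𝔟) := by rw [hwt]; exact hts
      rw [h2, h1] at hcomb
      have h3 := e.injective (Subtype.ext hcomb)
      exact (congrArg Subtype.val h3).symm
    rw [mem_phiSet_iff']
    exact ⟨x0, ⟨x, hx, by rw [hxx]; exact hux', hvx, hx0v⟩, rfl⟩

end PhiCyl
section Clopen

variable {𝔞 : Type*} [Fintype 𝔞] [Nonempty 𝔞] [TopologicalSpace 𝔞] [DiscreteTopology 𝔞]
variable {𝔟 : Type*} [Fintype 𝔟] [Nonempty 𝔟] [TopologicalSpace 𝔟] [DiscreteTopology 𝔟]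
variable {X : Set (ℕ → 𝔞)} {Y : Set (ℕ → 𝔟)}

lemma mem_cyl_ofFn_iff (hYinv : ∀ y ∈ Y, shift y ∈ Y) {N : ℕ} (a : Fin N → 𝔟) (z : ℕ → 𝔟) :
    z ∈ cyl Y [] (List.ofFn a) ↔ z ∈ Y ∧ ∀ i : Fin N, z (i : ℕ) = a i := by
  rw [mem_cyl_nil_iff hYinv]
  constructor
  · rintro ⟨hz, h⟩
    refine ⟨hz, fun i => ?_⟩
    have hi : (i : ℕ) < (List.ofFn a).length := by rw [List.length_ofFn]; exact i.2
    rw [h (i : ℕ) hi]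
    simp [List.get_ofFn]
  · rintro ⟨hz, h⟩
    refine ⟨hz, fun i hi => ?_⟩
    have hi' : i < N := by simpa [List.length_ofFn] using hi
    rw [show z i = a ⟨i, hi'⟩ from h ⟨i, hi'⟩]
    simp [List.get_ofFn]

lemma phiSet_cyl_nil_decomp (e : X ≃ₜ Y) (hXinv : ∀ x ∈ X, shift x ∈ X)
    (hYinv : ∀ y ∈ Y, shift y ∈ Y) (hYclosed : IsClosed Y) (w : List 𝔞) (n : ℕ) :
    ∃ N, n ≤ N ∧ phiSet e (cyl X [] w) =
      ⋃ a : {a : Fin N → 𝔟 // cyl Y [] (List.ofFn a) ⊆ phiSet e (cyl X [] w)},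
        cyl Y [] (List.ofFn (a : Fin N → 𝔟)) := by
  set S := phiSet e (cyl X [] w) with hSdef
  haveI : CompactSpace Y := isCompact_iff_compactSpace.mp hYclosed.isCompact
  -- the corresponding subset of the subtype `Y` is clopen
  have hT1 : IsClopen (Subtype.val ⁻¹' (cyl X [] w) : Set X) := by
    have heq : (Subtype.val ⁻¹' (cyl X [] w) : Set X)
        = ⋂ i : Fin w.length, {x : X | (x : ℕ → 𝔞) (i : ℕ) = w.get i} := by
      ext x
      simp only [Set.mem_preimage, Set.mem_iInter, Set.mem_setOf_eq]
      rw [mem_cyl_nil_iff hXinv]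
      constructor
      · rintro ⟨-, h⟩ i; exact h (i : ℕ) i.2
      · intro h; exact ⟨x.2, fun i hi => h ⟨i, hi⟩⟩
    rw [heq]
    refine isClopen_iInter_of_finite fun i => ?_
    have : {x : X | (x : ℕ → 𝔞) (i : ℕ) = w.get i}
        = (fun x : X => (x : ℕ → 𝔞) (i : ℕ)) ⁻¹' {w.get i} := rfl
    rw [this]
    exact (isClopen_discrete _).preimage ((continuous_apply (i : ℕ)).comp continuous_subtype_val)
  have hT2 : IsClopen (Subtype.val ⁻¹' S : Set Y) := by
    have heq : (Subtype.val ⁻¹' S : Set Y)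
        = e.symm ⁻¹' (Subtype.val ⁻¹' (cyl X [] w)) := by
      rw [hSdef]
      show Subtype.val ⁻¹' (Subtype.val '' (e '' (Subtype.val ⁻¹' cyl X [] w))) = _
      rw [Set.preimage_image_eq _ Subtype.val_injective, ← Homeomorph.preimage_symm]
    rw [heq]
    exact hT1.preimage e.symm.continuous
  -- basic open neighborhoods in `Y`
  set B : Y → ℕ → Set Y :=
    fun y m => {z : Y | ∀ i < m, (z : ℕ → 𝔟) i = (y : ℕ → 𝔟) i} with hBdef
  have hBopen : ∀ (y : Y) (m : ℕ), IsOpen (B y m) := by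
    intro y m
    have heq : B y m = ⋂ i : Fin m, {z : Y | (z : ℕ → 𝔟) (i : ℕ) = (y : ℕ → 𝔟) (i : ℕ)} := by
      ext z
      simp only [hBdef, Set.mem_setOf_eq, Set.mem_iInter]
      exact ⟨fun h i => h (i : ℕ) i.2, fun h i hi => h ⟨i, hi⟩⟩
    rw [heq]
    refine IsClopen.isOpen (isClopen_iInter_of_finite fun i => ?_)
    have h2 : {z : Y | (z : ℕ → 𝔟) (i : ℕ) = (y : ℕ → 𝔟) (i : ℕ)}
        = (fun z : Y => (z : ℕ → 𝔟) (i : ℕ)) ⁻¹' {(y : ℕ → 𝔟) (i : ℕ)} := rfl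
    rw [h2]
    exact (isClopen_discrete _).preimage ((continuous_apply (i : ℕ)).comp continuous_subtype_val)
  -- every point of the open set has a basic neighborhood inside it
  have hmem : ∀ y : Y, y ∈ (Subtype.val ⁻¹' S : Set Y) →
      ∃ m, B y m ⊆ (Subtype.val ⁻¹' S : Set Y) := by
    intro y hy
    obtain ⟨V, hVopen, hV⟩ := isOpen_induced_iff.mp hT2.isOpen
    have hyV : (y : ℕ → 𝔟) ∈ V := by
      rw [← hV] at hy; exact hy
    obtain ⟨I, u, hu, hpi⟩ := isOpen_pi_iff.mp hVopen _ hyV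
    refine ⟨I.sup id + 1, fun z hz => ?_⟩
    have hzV : (z : ℕ → 𝔟) ∈ V := by
      apply hpi
      intro i hi
      have hiI : i ∈ I := hi
      have hilt : i < I.sup id + 1 := Nat.lt_succ_of_le (Finset.le_sup (f := id) hiI)
      rw [hz i hilt]
      exact (hu i hiI).2
    rw [← hV]
    exact hzV
  choose m hm using fun y : (Subtype.val ⁻¹' S : Set Y) => hmem (y : Y) y.2
  -- compactness: finitely many basic neighborhoods cover
  have hcompact : IsCompact (Subtype.val ⁻¹' S : Set Y) := hT2.isClosed.isCompact
  obtain ⟨t, ht⟩ := hcompact.elim_finite_subcover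
    (fun y : (Subtype.val ⁻¹' S : Set Y) => B (y : Y) (m y))
    (fun y => hBopen _ _) (fun y hy => Set.mem_iUnion.mpr ⟨⟨y, hy⟩, fun i _ => rfl⟩)
  set N := max n (t.sup fun y => m y) with hNdef
  refine ⟨N, le_max_left _ _, ?_⟩
  apply Set.Subset.antisymm
  · intro z hz
    have hzY : z ∈ Y := phiSet_subset e _ hz
    have hzc : z ∈ cyl Y [] (List.ofFn (fun i : Fin N => z (i : ℕ))) :=
      (mem_cyl_ofFn_iff hYinv _ z).mpr ⟨hzY, fun i => rfl⟩
    have hsub : cyl Y [] (List.ofFn (fun i : Fin N => z (i : ℕ))) ⊆ S := by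
      intro z' hz'
      obtain ⟨hz'Y, hz'a⟩ := (mem_cyl_ofFn_iff hYinv _ z').mp hz'
      have hzz : (⟨z, hzY⟩ : Y) ∈ (Subtype.val ⁻¹' S : Set Y) := hz
      have hcov := ht hzz
      rw [Set.mem_iUnion₂] at hcov
      obtain ⟨y0, hy0t, hy0⟩ := hcov
      have hmN : m y0 ≤ N := le_trans (Finset.le_sup hy0t) (le_max_right _ _)
      have hz'B : (⟨z', hz'Y⟩ : Y) ∈ B (y0 : Y) (m y0) := by
        intro i hi
        have h1 : z' i = z i := hz'a ⟨i, lt_of_lt_of_le hi hmN⟩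
        have h2 := hy0 i hi
        show z' i = ((y0 : Y) : ℕ → 𝔟) i
        rw [h1]
        exact h2
      exact hm y0 hz'B
    exact Set.mem_iUnion.mpr ⟨⟨_, hsub⟩, hzc⟩
  · exact Set.iUnion_subset fun a => a.2

end Clopen
section Main

variable {𝔞 : Type*} [Fintype 𝔞] [Nonempty 𝔞] [TopologicalSpace 𝔞] [DiscreteTopology 𝔞]
variable {𝔟 : Type*} [Fintype 𝔟] [Nonempty 𝔟] [TopologicalSpace 𝔟] [DiscreteTopology 𝔟]
variable {X : Set (ℕ → 𝔞)} {Y : Set (ℕ → 𝔟)}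

lemma transport_chi_cyl_mem (e : X ≃ₜ Y) (hXinv : ∀ x ∈ X, shift x ∈ X)
    (hYinv : ∀ y ∈ Y, shift y ∈ Y) (hYclosed : IsClosed Y)
    (hconj : ∀ x : X, ((e ⟨shift (x : ℕ → 𝔞), hXinv _ x.2⟩ : Y) : ℕ → 𝔟)
      = shift ((e x : Y) : ℕ → 𝔟)) (u v : List 𝔞) :
    transport e (chi X (cyl X u v)) ∈ Dalg Y := by
  rw [transport_chi]
  obtain ⟨N, hN, hdecomp⟩ := phiSet_cyl_nil_decomp e hXinv hYinv hYclosed u u.length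
  have hA_u : shift^[u.length] '' phiSet e (cyl X [] u)
      = ⋃ a : {a : Fin N → 𝔟 // cyl Y [] (List.ofFn a) ⊆ phiSet e (cyl X [] u)},
          cyl Y (List.ofFn (a : Fin N → 𝔟)) ((List.ofFn (a : Fin N → 𝔟)).drop u.length) := by
    conv_lhs => rw [hdecomp, Set.image_iUnion]
    refine Set.iUnion_congr fun a => ?_
    refine image_shift_cyl_nil hYinv (w := List.ofFn (a : Fin N → 𝔟)) (k := u.length) ?_
    rw [List.length_ofFn]
    exact hN
  have hB : FinUnionC Y
      {y | y ∈ Y ∧ shift^[v.length] y ∈ shift^[u.length] '' phiSet e (cyl X [] u)} := by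
    rw [hA_u]
    exact finUnionC_preimage hYinv (finUnionC_iUnion fun a => finUnionC_cyl _ _) v.length
  have hA_v : FinUnionC Y (phiSet e (cyl X [] v)) := by
    obtain ⟨M, -, hdv⟩ := phiSet_cyl_nil_decomp e hXinv hYinv hYclosed v 0
    rw [hdv]
    exact finUnionC_iUnion fun a => finUnionC_cyl _ _
  rw [phiSet_cyl hXinv hconj u v, chi_inter]
  exact mul_mem (chi_mem_Dalg_of_finUnionC hA_v) (chi_mem_Dalg_of_finUnionC hB)

/-- `transport` as a non-unital star algebra homomorphism. -/
def transportHom (e : X ≃ₜ Y) : Linf X →⋆ₙₐ[ℂ] Linf Y :=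
  { toFun := transport e
    map_smul' := transport_smul e
    map_zero' := transport_zero e
    map_add' := transport_add e
    map_mul' := transport_mul e
    map_star' := transport_star e }

lemma transport_mem_Dalg (e : X ≃ₜ Y) (hXinv : ∀ x ∈ X, shift x ∈ X)
    (hYinv : ∀ y ∈ Y, shift y ∈ Y) (hYclosed : IsClosed Y)
    (hconj : ∀ x : X, ((e ⟨shift (x : ℕ → 𝔞), hXinv _ x.2⟩ : Y) : ℕ → 𝔟)
      = shift ((e x : Y) : ℕ → 𝔟))
    {f : Linf X} (hf : f ∈ Dalg X) : transport e f ∈ Dalg Y := by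
  have hle : (NonUnitalStarAlgebra.adjoin ℂ
        {f : Linf X | ∃ u v : List 𝔞, f = chi X (cyl X u v)}).topologicalClosure
      ≤ (Dalg Y).comap (transportHom e) := by
    apply NonUnitalStarSubalgebra.topologicalClosure_minimal
    · apply NonUnitalStarAlgebra.adjoin_le
      rintro g ⟨u, v, rfl⟩
      show transport e (chi X (cyl X u v)) ∈ Dalg Y
      exact transport_chi_cyl_mem e hXinv hYinv hYclosed hconj u v
    · have hcar : (((Dalg Y).comap (transportHom e) : NonUnitalStarSubalgebra ℂ (Linf X))
          : Set (Linf X)) = transport e ⁻¹' (Dalg Y : Set (Linf Y)) := rfl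
      rw [hcar]
      exact IsClosed.preimage (continuous_transport e)
        ((NonUnitalStarAlgebra.adjoin ℂ _).isClosed_topologicalClosure)
  exact hle hf

end Main
section Rest

variable {𝔞 : Type*} [Fintype 𝔞] [Nonempty 𝔞] [TopologicalSpace 𝔞] [DiscreteTopology 𝔞]
variable {𝔟 : Type*} [Fintype 𝔟] [Nonempty 𝔟] [TopologicalSpace 𝔟] [DiscreteTopology 𝔟]
variable {X : Set (ℕ → 𝔞)} {Y : Set (ℕ → 𝔟)}

lemma transport_image_continuous (e : X ≃ₜ Y) :
    transport e '' {f : Linf X | Continuous fun x : X => f x}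
      = {g : Linf Y | Continuous fun y : Y => g y} := by
  ext g
  constructor
  · rintro ⟨f, hf, rfl⟩
    show Continuous fun y : Y => f (e.symm y)
    exact hf.comp e.symm.continuous
  · intro hg
    refine ⟨transport e.symm g, ?_, transport_transport_symm e g⟩
    show Continuous fun x : X => g (e.symm.symm x)
    exact hg.comp e.symm.symm.continuous

lemma transport_alpha (e : X ≃ₜ Y) (hXinv : ∀ x ∈ X, shift x ∈ X)
    (hYinv : ∀ y ∈ Y, shift y ∈ Y)
    (hconj : ∀ x : X, ((e ⟨shift (x : ℕ → 𝔞), hXinv _ x.2⟩ : Y) : ℕ → 𝔟)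
      = shift ((e x : Y) : ℕ → 𝔟)) (f : Linf X) :
    transport e (alphaMap X hXinv f) = alphaMap Y hYinv (transport e f) := by
  apply lp.ext; funext y
  show f ⟨shift ((e.symm y : X) : ℕ → 𝔞), hXinv _ (e.symm y).2⟩
    = f (e.symm ⟨shift (y : ℕ → 𝔟), hYinv _ y.2⟩)
  exact (congrArg f (Subtype.ext (hconj_symm hXinv hYinv hconj y))).symm

lemma mem_shift_image_iff_preims_nonempty {Z : Set (ℕ → 𝔞)} (c : ℕ → 𝔞) :
    c ∈ shift '' Z ↔ (preims Z c).Nonempty :=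
  ⟨fun ⟨z, hz, h⟩ => ⟨⟨z, hz⟩, h⟩, fun ⟨z, hz⟩ => ⟨(z : ℕ → 𝔞), z.2, hz⟩⟩

lemma preims_eq (e : X ≃ₜ Y) (hXinv : ∀ x ∈ X, shift x ∈ X)
    (hYinv : ∀ y ∈ Y, shift y ∈ Y)
    (hconj : ∀ x : X, ((e ⟨shift (x : ℕ → 𝔞), hXinv _ x.2⟩ : Y) : ℕ → 𝔟)
      = shift ((e x : Y) : ℕ → 𝔟)) (y : Y) :
    preims Y (y : ℕ → 𝔟) = (fun x : X => e x) '' preims X ((e.symm y : X) : ℕ → 𝔞) := by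
  ext z
  constructor
  · intro hz
    refine ⟨e.symm z, ?_, by simp⟩
    show shift ((e.symm z : X) : ℕ → 𝔞) = ((e.symm y : X) : ℕ → 𝔞)
    rw [← hconj_symm hXinv hYinv hconj z]
    have hzy : (⟨shift (z : ℕ → 𝔟), hYinv _ z.2⟩ : Y) = y := Subtype.ext hz
    rw [hzy]
  · rintro ⟨x, hx, rfl⟩
    show shift ((e x : Y) : ℕ → 𝔟) = (y : ℕ → 𝔟)
    rw [← hconj x]
    have hxy : (⟨shift (x : ℕ → 𝔞), hXinv _ x.2⟩ : X) = e.symm y := Subtype.ext hx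
    rw [hxy, e.apply_symm_apply]

lemma transport_Lmap (e : X ≃ₜ Y) (hXinv : ∀ x ∈ X, shift x ∈ X)
    (hYinv : ∀ y ∈ Y, shift y ∈ Y)
    (hconj : ∀ x : X, ((e ⟨shift (x : ℕ → 𝔞), hXinv _ x.2⟩ : Y) : ℕ → 𝔟)
      = shift ((e x : Y) : ℕ → 𝔟)) (f : Linf X) :
    transport e (Lmap X f) = Lmap Y (transport e f) := by
  apply lp.ext; funext y
  have hpre := preims_eq e hXinv hYinv hconj y
  have hiff : ((y : ℕ → 𝔟) ∈ shift '' Y) ↔ (((e.symm y : X) : ℕ → 𝔞) ∈ shift '' X) := by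
    rw [mem_shift_image_iff_preims_nonempty, mem_shift_image_iff_preims_nonempty, hpre,
      Set.image_nonempty]
  have lhs : transport e (Lmap X f) y
      = if ((e.symm y : X) : ℕ → 𝔞) ∈ shift '' X then
          (((preims X ((e.symm y : X) : ℕ → 𝔞)).ncard : ℂ))⁻¹
            * ∑ᶠ x ∈ preims X ((e.symm y : X) : ℕ → 𝔞), f x
        else 0 := rfl
  have rhs : Lmap Y (transport e f) y
      = if (y : ℕ → 𝔟) ∈ shift '' Y then
          (((preims Y (y : ℕ → 𝔟)).ncard : ℂ))⁻¹
            * ∑ᶠ z ∈ preims Y (y : ℕ → 𝔟), transport e f z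
        else 0 := rfl
  by_cases h : ((e.symm y : X) : ℕ → 𝔞) ∈ shift '' X
  · rw [lhs, rhs, if_pos h, if_pos (hiff.mpr h), hpre,
      Set.ncard_image_of_injective _ e.injective,
      finsum_mem_image (e.injective.injOn)]
    congr 1
    exact finsum_mem_congr rfl fun x hx => by rw [transport_apply, e.symm_apply_apply]
  · rw [lhs, rhs, if_neg h, if_neg (fun hc => h (hiff.mp hc))]

lemma transport_image_Dalg (e : X ≃ₜ Y) (hXinv : ∀ x ∈ X, shift x ∈ X)
    (hYinv : ∀ y ∈ Y, shift y ∈ Y) (hXclosed : IsClosed X) (hYclosed : IsClosed Y)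
    (hconj : ∀ x : X, ((e ⟨shift (x : ℕ → 𝔞), hXinv _ x.2⟩ : Y) : ℕ → 𝔟)
      = shift ((e x : Y) : ℕ → 𝔟)) :
    transport e '' (Dalg X : Set (Linf X)) = (Dalg Y : Set (Linf Y)) := by
  apply Set.Subset.antisymm
  · rintro g ⟨f, hf, rfl⟩
    exact transport_mem_Dalg e hXinv hYinv hYclosed hconj hf
  · intro g hg
    refine ⟨transport e.symm g, ?_, transport_transport_symm e g⟩
    exact transport_mem_Dalg e.symm hYinv hXinv hXclosed
      (hconj_symm hXinv hYinv hconj) hg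

end Rest

/-- if `φ : X₁ → X₂` is a conjugacy of one-sided shift spaces, then the
*-isomorphism `Φ : l∞(X₁) → l∞(X₂)`, `Φ(f) = f ∘ φ⁻¹`, satisfies `Φ(C(X₁)) = C(X₂)`,
`Φ ∘ α_{X₁} = α_{X₂} ∘ Φ`, `Φ ∘ L_{X₁} = L_{X₂} ∘ Φ` and `Φ(D_{X₁}) = D_{X₂}`. -/
theorem conjugacy_transport {𝔟 : Type*} [Fintype 𝔟] [Nonempty 𝔟]
    [TopologicalSpace 𝔟] [DiscreteTopology 𝔟]
    (X₁ : Set (ℕ → 𝔞)) (hX₁closed : IsClosed X₁) (hX₁inv : ∀ x ∈ X₁, shift x ∈ X₁)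
    (X₂ : Set (ℕ → 𝔟)) (hX₂closed : IsClosed X₂) (hX₂inv : ∀ x ∈ X₂, shift x ∈ X₂)
    (e : X₁ ≃ₜ X₂)
    (hconj : ∀ x : X₁,
      ((e ⟨shift (x : ℕ → 𝔞), hX₁inv _ x.2⟩ : X₂) : ℕ → 𝔟) = shift ((e x : X₂) : ℕ → 𝔟)) :
    Function.Bijective (transport e) ∧
    (∀ f g : Linf X₁, transport e (f + g) = transport e f + transport e g) ∧
    (∀ (c : ℂ) (f : Linf X₁), transport e (c • f) = c • transport e f) ∧
    (∀ f g : Linf X₁, transport e (f * g) = transport e f * transport e g) ∧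
    (∀ f : Linf X₁, transport e (star f) = star (transport e f)) ∧
    transport e '' {f : Linf X₁ | Continuous fun x : X₁ => f x}
      = {g : Linf X₂ | Continuous fun y : X₂ => g y} ∧
    (∀ f : Linf X₁, transport e (alphaMap X₁ hX₁inv f) = alphaMap X₂ hX₂inv (transport e f)) ∧
    (∀ f : Linf X₁, transport e (Lmap X₁ f) = Lmap X₂ (transport e f)) ∧
    transport e '' (Dalg X₁ : Set (Linf X₁)) = (Dalg X₂ : Set (Linf X₂)) := by
  exact ⟨bijective_transport e, transport_add e, transport_smul e, transport_mul e,
    transport_star e, transport_image_continuous e,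
    transport_alpha e hX₁inv hX₂inv hconj,
    transport_Lmap e hX₁inv hX₂inv hconj,
    transport_image_Dalg e hX₁inv hX₂inv hX₁closed hX₂closed hconj⟩


end
end

section
/- For all natural numbers 0 ≤ k ≤ l, the diagram formed by I_k^l, A_k^l, A_k^{l+1} and I_{k+1}^{l+1} commutes: A_k^{l+1} ∘ I_k^l = I_{k+1}^{l+1} ∘ A_k^l as linear maps from ℤ^{M_k^l} to ℤ^{M_{k+1}^{l+2}}. -/
open scoped ENNReal
open Classical
set_option linter.unusedSectionVars false
set_option synthInstance.maxHeartbeats 1000000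
set_option maxHeartbeats 1000000

noncomputable section

variable {𝔞 : Type*} [Fintype 𝔞] [Nonempty 𝔞] [TopologicalSpace 𝔞] [DiscreteTopology 𝔞]

/-- `P_k(x) = {u ∈ 𝔞^k : ux ∈ X}`. -/
def Pk (X : Set (ℕ → 𝔞)) (k : ℕ) (x : ℕ → 𝔞) : Set (List 𝔞) :=
  {u | u.length = k ∧ wcat u x ∈ X}

/-- `l`-past equivalence on `X`: `x ∼_l y` iff `⋃_{k≤l} P_k(x) = ⋃_{k≤l} P_k(y)`. -/
def pastSetoid (X : Set (ℕ → 𝔞)) (l : ℕ) : Setoid X where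
  r x y := (⋃ k ≤ l, Pk X k (x : ℕ → 𝔞)) = ⋃ k ≤ l, Pk X k (y : ℕ → 𝔞)
  iseqv := ⟨fun _ => rfl, Eq.symm, Eq.trans⟩

/-- The (finite) set of `l`-past equivalence classes of `X`. -/
abbrev PastQuot (X : Set (ℕ → 𝔞)) (l : ℕ) : Type _ := Quotient (pastSetoid X l)

/-- An `l`-past equivalence class, as a subset of `X`. -/
def clsOf (X : Set (ℕ → 𝔞)) (l : ℕ) (q : PastQuot X l) : Set X :=
  {y : X | Quotient.mk (pastSetoid X l) y = q}

lemma mem_iUnion_Pk_length_le {X : Set (ℕ → 𝔞)} {l : ℕ} {x : ℕ → 𝔞} {u : List 𝔞}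
    (h : u ∈ ⋃ k ≤ l, Pk X k x) : u.length ≤ l := by
  simp only [Set.mem_iUnion, Pk, Set.mem_setOf_eq] at h
  obtain ⟨k, hk, hlen, -⟩ := h
  omega

lemma pastQuot_finite (X : Set (ℕ → 𝔞)) (l : ℕ) : Finite (PastQuot X l) := by
  have hlift : ∀ a b : X, (pastSetoid X l).r a b →
      ({u : {u : List 𝔞 // u.length ≤ l} | (u : List 𝔞) ∈ ⋃ k ≤ l, Pk X k (a : ℕ → 𝔞)}
        : Set {u : List 𝔞 // u.length ≤ l}) =
      {u : {u : List 𝔞 // u.length ≤ l} | (u : List 𝔞) ∈ ⋃ k ≤ l, Pk X k (b : ℕ → 𝔞)} := by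
    intro a b hab
    have : (⋃ k ≤ l, Pk X k (a : ℕ → 𝔞)) = ⋃ k ≤ l, Pk X k (b : ℕ → 𝔞) := hab
    rw [this]
  haveI : Finite {u : List 𝔞 // u.length ≤ l} := (List.finite_length_le 𝔞 l).to_subtype
  apply Finite.of_injective (f := fun q : PastQuot X l => Quotient.lift _ hlift q)
  intro q₁ q₂ h
  obtain ⟨a, rfl⟩ := Quotient.exists_rep q₁
  obtain ⟨b, rfl⟩ := Quotient.exists_rep q₂
  apply Quotient.sound
  show (⋃ k ≤ l, Pk X k (a : ℕ → 𝔞)) = ⋃ k ≤ l, Pk X k (b : ℕ → 𝔞)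
  simp only [Quotient.lift_mk] at h
  ext u
  constructor
  · intro hu
    have hlen : u.length ≤ l := mem_iUnion_Pk_length_le hu
    have := Set.ext_iff.mp h ⟨u, hlen⟩
    exact this.mp hu
  · intro hu
    have hlen : u.length ≤ l := mem_iUnion_Pk_length_le hu
    have := Set.ext_iff.mp h ⟨u, hlen⟩
    exact this.mpr hu

/-- `M_k^l`: the set of `l`-past equivalence classes `E` with `P_k(E) ≠ ∅`. -/
def Mset (X : Set (ℕ → 𝔞)) (k l : ℕ) : Set (PastQuot X l) :=
  {q | ∃ x : X, Quotient.mk (pastSetoid X l) x = q ∧ (Pk X k (x : ℕ → 𝔞)).Nonempty}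

/-- The entry `I_l(i,j)`: `1` if `E_i^{l+1} ⊆ E_j^l`, else `0`. -/
def Ient (X : Set (ℕ → 𝔞)) (l : ℕ) (i : PastQuot X (l + 1)) (j : PastQuot X l) : ℤ :=
  if clsOf X (l + 1) i ⊆ clsOf X l j then 1 else 0

/-- `aE = {ax ∈ X : x ∈ E}` for a letter `a` and a set `E ⊆ X`. -/
def lset (X : Set (ℕ → 𝔞)) (a : 𝔞) (s : Set X) : Set X :=
  {y : X | ∃ x ∈ s, (y : ℕ → 𝔞) = wcat [a] (x : ℕ → 𝔞)}

/-- The entry `A_l(i,j,a)`: `1` if `∅ ≠ aE_i^{l+1} ⊆ E_j^l`, else `0`. -/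
def Aent (X : Set (ℕ → 𝔞)) (l : ℕ) (i : PastQuot X (l + 1)) (j : PastQuot X l) (a : 𝔞) : ℤ :=
  if (lset X a (clsOf X (l + 1) i)).Nonempty ∧ lset X a (clsOf X (l + 1) i) ⊆ clsOf X l j
    then 1 else 0

/-- The linear map `ℤ^M → ℤ^N` with matrix entries `c : N → M → ℤ`,
sending `e_j` to `∑_i c i j • e_i`. -/
def matLin {M N : Type*} [Finite M] (c : N → M → ℤ) : (M → ℤ) →ₗ[ℤ] (N → ℤ) where
  toFun f := fun i => ∑ᶠ j : M, c i j * f j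
  map_add' f g := by
    funext i
    calc ∑ᶠ j : M, c i j * (f j + g j)
        = ∑ᶠ j : M, (c i j * f j + c i j * g j) := finsum_congr fun j => mul_add _ _ _
      _ = (∑ᶠ j : M, c i j * f j) + ∑ᶠ j : M, c i j * g j :=
          finsum_add_distrib (Set.toFinite _) (Set.toFinite _)
  map_smul' r f := by
    funext i
    simp only [Pi.smul_apply, smul_eq_mul, RingHom.id_apply]
    calc ∑ᶠ j : M, c i j * (r * f j)
        = ∑ᶠ j : M, r * (c i j * f j) := finsum_congr fun j => by ring
      _ = r * ∑ᶠ j : M, c i j * f j := (mul_finsum _ _).symm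

/-- The map `I_k^l : ℤ^{M_k^l} → ℤ^{M_k^{l+1}}`, `e_j ↦ ∑_{i ∈ M_k^{l+1}} I_l(i,j) e_i`. -/
def Imap (X : Set (ℕ → 𝔞)) (k l : ℕ) : (Mset X k l → ℤ) →ₗ[ℤ] (Mset X k (l + 1) → ℤ) :=
  haveI : Finite (PastQuot X l) := pastQuot_finite X l
  matLin fun (i : Mset X k (l + 1)) (j : Mset X k l) =>
    Ient X l (i : PastQuot X (l + 1)) (j : PastQuot X l)

/-- The map `A_k^l : ℤ^{M_k^l} → ℤ^{M_{k+1}^{l+1}}`,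
`e_j ↦ ∑_{i ∈ M_{k+1}^{l+1}} ∑_{a ∈ 𝔞} A_l(i,j,a) e_i`. -/
def Amap (X : Set (ℕ → 𝔞)) (k l : ℕ) : (Mset X k l → ℤ) →ₗ[ℤ] (Mset X (k + 1) (l + 1) → ℤ) :=
  haveI : Finite (PastQuot X l) := pastQuot_finite X l
  matLin fun (i : Mset X (k + 1) (l + 1)) (j : Mset X k l) =>
    ∑ a : 𝔞, Aent X l (i : PastQuot X (l + 1)) (j : PastQuot X l) a

section Helpers

variable {X : Set (ℕ → 𝔞)}

lemma wcat_wcat_single (a : 𝔞) (u : List 𝔞) (x : ℕ → 𝔞) :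
    wcat (u ++ [a]) x = wcat u (wcat [a] x) := by
  funext n
  simp only [wcat, List.length_append, List.length_singleton, List.get_eq_getElem]
  by_cases h1 : n < u.length
  · rw [dif_pos (by omega), dif_pos h1, List.getElem_append_left h1]
  · by_cases h2 : n = u.length
    · subst h2
      rw [dif_pos (by omega), dif_neg h1, dif_pos (by omega)]
      simp [List.getElem_append_right]
    · rw [dif_neg (by omega), dif_neg h1, dif_neg (by omega)]
      congr 1

lemma mem_Pk_wcat {a : 𝔞} {x : ℕ → 𝔞} {m : ℕ} {u : List 𝔞} :
    u ∈ Pk X m (wcat [a] x) ↔ u.length = m ∧ u ++ [a] ∈ Pk X (m + 1) x := by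
  simp only [Pk, Set.mem_setOf_eq, List.length_append, List.length_singleton,
    ← wcat_wcat_single]
  constructor
  · rintro ⟨h1, h2⟩
    exact ⟨h1, by omega, h2⟩
  · rintro ⟨h1, _, h2⟩
    exact ⟨h1, h2⟩

lemma Pk_const {k l : ℕ} (hk : k ≤ l) {x y : X}
    (h : Quotient.mk (pastSetoid X l) x = Quotient.mk (pastSetoid X l) y) :
    Pk X k (x : ℕ → 𝔞) = Pk X k (y : ℕ → 𝔞) := by
  have hr : (⋃ k' ≤ l, Pk X k' (x : ℕ → 𝔞)) = ⋃ k' ≤ l, Pk X k' (y : ℕ → 𝔞) :=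
    Quotient.exact h
  have key : ∀ z w : X, (⋃ k' ≤ l, Pk X k' (z : ℕ → 𝔞)) = (⋃ k' ≤ l, Pk X k' (w : ℕ → 𝔞)) →
      Pk X k (z : ℕ → 𝔞) ⊆ Pk X k (w : ℕ → 𝔞) := by
    intro z w hzw u hu
    have h1 : u ∈ ⋃ k' ≤ l, Pk X k' (w : ℕ → 𝔞) := by
      rw [← hzw]
      exact Set.mem_iUnion₂.mpr ⟨k, hk, hu⟩
    simp only [Set.mem_iUnion] at h1
    obtain ⟨k', hk', hu'⟩ := h1
    have e1 : u.length = k' := hu'.1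
    have e2 : u.length = k := hu.1
    have : k' = k := by omega
    subst this
    exact hu'
  exact Set.Subset.antisymm (key x y hr) (key y x hr.symm)

lemma mk_down {l : ℕ} {x y : X}
    (h : Quotient.mk (pastSetoid X (l + 1)) x = Quotient.mk (pastSetoid X (l + 1)) y) :
    Quotient.mk (pastSetoid X l) x = Quotient.mk (pastSetoid X l) y := by
  apply Quotient.sound
  show (⋃ k ≤ l, Pk X k (x : ℕ → 𝔞)) = ⋃ k ≤ l, Pk X k (y : ℕ → 𝔞)
  apply Set.iUnion₂_congr
  intro k hk
  exact Pk_const (Nat.le_succ_of_le hk) h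

lemma wcat_mem_of_mk_eq {l : ℕ} {x y : X} {a : 𝔞}
    (h : Quotient.mk (pastSetoid X (l + 1)) x = Quotient.mk (pastSetoid X (l + 1)) y)
    (ha : wcat [a] (x : ℕ → 𝔞) ∈ X) : wcat [a] (y : ℕ → 𝔞) ∈ X := by
  have h1 : Pk X 1 (x : ℕ → 𝔞) = Pk X 1 (y : ℕ → 𝔞) := Pk_const (by omega) h
  have hx : [a] ∈ Pk X 1 (x : ℕ → 𝔞) := ⟨rfl, ha⟩
  rw [h1] at hx
  exact hx.2

lemma mk_wcat {l : ℕ} {x y : X} {a : 𝔞}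
    (h : Quotient.mk (pastSetoid X (l + 1)) x = Quotient.mk (pastSetoid X (l + 1)) y)
    (hax : wcat [a] (x : ℕ → 𝔞) ∈ X) (hay : wcat [a] (y : ℕ → 𝔞) ∈ X) :
    Quotient.mk (pastSetoid X l) (⟨wcat [a] (x : ℕ → 𝔞), hax⟩ : X)
      = Quotient.mk (pastSetoid X l) (⟨wcat [a] (y : ℕ → 𝔞), hay⟩ : X) := by
  apply Quotient.sound
  show (⋃ k ≤ l, Pk X k (wcat [a] (x : ℕ → 𝔞))) = ⋃ k ≤ l, Pk X k (wcat [a] (y : ℕ → 𝔞))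
  apply Set.iUnion₂_congr
  intro k hk
  ext u
  rw [mem_Pk_wcat, mem_Pk_wcat, Pk_const (Nat.succ_le_succ hk) h]

lemma lhs_eval {k l : ℕ} (hkl : k ≤ l) (i : PastQuot X (l + 1 + 1)) (j : PastQuot X l)
    (hj : j ∈ Mset X k l) (a : 𝔞) :
    (∑ᶠ m : Mset X k (l + 1),
        Aent X (l + 1) i (m : PastQuot X (l + 1)) a * Ient X l (m : PastQuot X (l + 1)) j)
    = if (lset X a (clsOf X (l + 1 + 1) i)).Nonempty ∧
          lset X a (clsOf X (l + 1 + 1) i) ⊆ clsOf X l j then 1 else 0 := by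
  by_cases hΦ : (lset X a (clsOf X (l + 1 + 1) i)).Nonempty ∧
      lset X a (clsOf X (l + 1 + 1) i) ⊆ clsOf X l j
  · rw [if_pos hΦ]
    obtain ⟨⟨y, hy⟩, hsub⟩ := hΦ
    obtain ⟨x, hx, hyx⟩ := hy
    have hyl : y ∈ lset X a (clsOf X (l + 1 + 1) i) := ⟨x, hx, hyx⟩
    have hyj : Quotient.mk (pastSetoid X l) y = j := hsub hyl
    have hPky : (Pk X k (y : ℕ → 𝔞)).Nonempty := by
      obtain ⟨z, hz1, hz2⟩ := hj
      rw [Pk_const hkl (hyj.trans hz1.symm)]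
      exact hz2
    have hm₀ : Quotient.mk (pastSetoid X (l + 1)) y ∈ Mset X k (l + 1) := ⟨y, rfl, hPky⟩
    have hzero : ∀ m : Mset X k (l + 1),
        m ≠ ⟨Quotient.mk (pastSetoid X (l + 1)) y, hm₀⟩ →
        Aent X (l + 1) i (m : PastQuot X (l + 1)) a * Ient X l (m : PastQuot X (l + 1)) j
          = 0 := by
      intro m hm
      by_cases hA : (lset X a (clsOf X (l + 1 + 1) i)).Nonempty ∧
          lset X a (clsOf X (l + 1 + 1) i) ⊆ clsOf X (l + 1) (m : PastQuot X (l + 1))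
      · exfalso
        have hym : Quotient.mk (pastSetoid X (l + 1)) y = (m : PastQuot X (l + 1)) :=
          hA.2 hyl
        exact hm (Subtype.ext hym.symm)
      · have : Aent X (l + 1) i (m : PastQuot X (l + 1)) a = 0 := if_neg hA
        rw [this, zero_mul]
    rw [finsum_eq_single _ _ hzero]
    have hA : Aent X (l + 1) i (Quotient.mk (pastSetoid X (l + 1)) y) a = 1 := by
      refine if_pos ⟨⟨y, hyl⟩, ?_⟩
      rintro z ⟨w, hw, hzw⟩
      have h2 : Quotient.mk (pastSetoid X (l + 1 + 1)) w
          = Quotient.mk (pastSetoid X (l + 1 + 1)) x := hw.trans hx.symm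
      have haw : wcat [a] (w : ℕ → 𝔞) ∈ X := hzw ▸ z.2
      have hax : wcat [a] (x : ℕ → 𝔞) ∈ X := hyx ▸ y.2
      have hmk := mk_wcat h2 haw hax
      have hz' : z = (⟨wcat [a] (w : ℕ → 𝔞), haw⟩ : X) := Subtype.ext hzw
      have hy' : y = (⟨wcat [a] (x : ℕ → 𝔞), hax⟩ : X) := Subtype.ext hyx
      show Quotient.mk (pastSetoid X (l + 1)) z = Quotient.mk (pastSetoid X (l + 1)) y
      rw [hz', hmk, ← hy']
    have hI : Ient X l (Quotient.mk (pastSetoid X (l + 1)) y) j = 1 := by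
      refine if_pos ?_
      intro z hz
      have hzy : Quotient.mk (pastSetoid X (l + 1)) z
          = Quotient.mk (pastSetoid X (l + 1)) y := hz
      show Quotient.mk (pastSetoid X l) z = j
      rw [mk_down hzy, hyj]
    show Aent X (l + 1) i (Quotient.mk (pastSetoid X (l + 1)) y) a
        * Ient X l (Quotient.mk (pastSetoid X (l + 1)) y) j = 1
    rw [hA, hI, mul_one]
  · rw [if_neg hΦ]
    apply finsum_eq_zero_of_forall_eq_zero
    intro m
    by_cases hA : (lset X a (clsOf X (l + 1 + 1) i)).Nonempty ∧
        lset X a (clsOf X (l + 1 + 1) i) ⊆ clsOf X (l + 1) (m : PastQuot X (l + 1))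
    · by_cases hI : clsOf X (l + 1) (m : PastQuot X (l + 1)) ⊆ clsOf X l j
      · exact absurd ⟨hA.1, hA.2.trans hI⟩ hΦ
      · have : Ient X l (m : PastQuot X (l + 1)) j = 0 := if_neg hI
        rw [this, mul_zero]
    · have : Aent X (l + 1) i (m : PastQuot X (l + 1)) a = 0 := if_neg hA
      rw [this, zero_mul]

lemma rhs_eval {k l : ℕ} (i : PastQuot X (l + 1 + 1)) (j : PastQuot X l)
    (hi : i ∈ Mset X (k + 1) (l + 1 + 1)) (a : 𝔞) :
    (∑ᶠ m : Mset X (k + 1) (l + 1),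
        Ient X (l + 1) i (m : PastQuot X (l + 1)) * Aent X l (m : PastQuot X (l + 1)) j a)
    = if (lset X a (clsOf X (l + 1 + 1) i)).Nonempty ∧
          lset X a (clsOf X (l + 1 + 1) i) ⊆ clsOf X l j then 1 else 0 := by
  obtain ⟨x₀, hx₀, hPk₀⟩ := hi
  have hm₀ : Quotient.mk (pastSetoid X (l + 1)) x₀ ∈ Mset X (k + 1) (l + 1) :=
    ⟨x₀, rfl, hPk₀⟩
  have hred : ∀ z : X, Quotient.mk (pastSetoid X (l + 1 + 1)) z = i →
      Quotient.mk (pastSetoid X (l + 1)) z = Quotient.mk (pastSetoid X (l + 1)) x₀ :=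
    fun z hz => mk_down (hz.trans hx₀.symm)
  by_cases hΦ : (lset X a (clsOf X (l + 1 + 1) i)).Nonempty ∧
      lset X a (clsOf X (l + 1 + 1) i) ⊆ clsOf X l j
  · rw [if_pos hΦ]
    obtain ⟨⟨y, hy⟩, hsub⟩ := hΦ
    obtain ⟨x, hx, hyx⟩ := hy
    have hyl : y ∈ lset X a (clsOf X (l + 1 + 1) i) := ⟨x, hx, hyx⟩
    have hzero : ∀ m : Mset X (k + 1) (l + 1),
        m ≠ ⟨Quotient.mk (pastSetoid X (l + 1)) x₀, hm₀⟩ →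
        Ient X (l + 1) i (m : PastQuot X (l + 1)) * Aent X l (m : PastQuot X (l + 1)) j a
          = 0 := by
      intro m hm
      by_cases hI : clsOf X (l + 1 + 1) i ⊆ clsOf X (l + 1) (m : PastQuot X (l + 1))
      · exfalso
        have hx₀m : Quotient.mk (pastSetoid X (l + 1)) x₀ = (m : PastQuot X (l + 1)) :=
          hI hx₀
        exact hm (Subtype.ext hx₀m.symm)
      · have : Ient X (l + 1) i (m : PastQuot X (l + 1)) = 0 := if_neg hI
        rw [this, zero_mul]
    rw [finsum_eq_single _ _ hzero]
    have hax : wcat [a] (x : ℕ → 𝔞) ∈ X := hyx ▸ y.2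
    have hxm : Quotient.mk (pastSetoid X (l + 1)) x = Quotient.mk (pastSetoid X (l + 1)) x₀ :=
      hred x hx
    have hI : Ient X (l + 1) i (Quotient.mk (pastSetoid X (l + 1)) x₀) = 1 := by
      refine if_pos ?_
      intro z hz
      exact hred z hz
    have hA : Aent X l (Quotient.mk (pastSetoid X (l + 1)) x₀) j a = 1 := by
      refine if_pos ⟨⟨y, x, hxm, hyx⟩, ?_⟩
      rintro z ⟨w, hw, hzw⟩
      have haw : wcat [a] (w : ℕ → 𝔞) ∈ X := hzw ▸ z.2
      have h2 : Quotient.mk (pastSetoid X (l + 1)) w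
          = Quotient.mk (pastSetoid X (l + 1)) x := hw.trans hxm.symm
      have hmk := mk_wcat h2 haw hax
      have hz' : z = (⟨wcat [a] (w : ℕ → 𝔞), haw⟩ : X) := Subtype.ext hzw
      have hy' : y = (⟨wcat [a] (x : ℕ → 𝔞), hax⟩ : X) := Subtype.ext hyx
      have hyj : Quotient.mk (pastSetoid X l) y = j := hsub hyl
      show Quotient.mk (pastSetoid X l) z = j
      rw [hz', hmk, ← hy', hyj]
    show Ient X (l + 1) i (Quotient.mk (pastSetoid X (l + 1)) x₀)
        * Aent X l (Quotient.mk (pastSetoid X (l + 1)) x₀) j a = 1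
    rw [hI, hA, mul_one]
  · rw [if_neg hΦ]
    apply finsum_eq_zero_of_forall_eq_zero
    intro m
    by_cases hI : clsOf X (l + 1 + 1) i ⊆ clsOf X (l + 1) (m : PastQuot X (l + 1))
    · by_cases hA : (lset X a (clsOf X (l + 1) (m : PastQuot X (l + 1)))).Nonempty ∧
          lset X a (clsOf X (l + 1) (m : PastQuot X (l + 1))) ⊆ clsOf X l j
      · exfalso
        apply hΦ
        constructor
        · obtain ⟨z, w, hw, hzw⟩ := hA.1
          have hw' : Quotient.mk (pastSetoid X (l + 1)) w
              = Quotient.mk (pastSetoid X (l + 1)) x₀ := hw.trans (hI hx₀).symm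
          have haw : wcat [a] (w : ℕ → 𝔞) ∈ X := hzw ▸ z.2
          have hax₀ : wcat [a] (x₀ : ℕ → 𝔞) ∈ X := wcat_mem_of_mk_eq hw' haw
          exact ⟨⟨wcat [a] (x₀ : ℕ → 𝔞), hax₀⟩, x₀, hx₀, rfl⟩
        · rintro z ⟨w, hw, hzw⟩
          exact hA.2 ⟨w, hI hw, hzw⟩
      · have : Aent X l (m : PastQuot X (l + 1)) j a = 0 := if_neg hA
        rw [this, mul_zero]
    · have : Ient X (l + 1) i (m : PastQuot X (l + 1)) = 0 := if_neg hI
      rw [this, zero_mul]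

lemma matLin_apply {M N : Type*} [Finite M] (c : N → M → ℤ) (f : M → ℤ) (i : N) :
    matLin c f i = ∑ᶠ j : M, c i j * f j := rfl

lemma matLin_comp {M N P : Type*} [Finite M] [Finite N] (c : P → N → ℤ) (d : N → M → ℤ) :
    (matLin c).comp (matLin d) = matLin (fun p m => ∑ᶠ n : N, c p n * d n m) := by
  haveI := Fintype.ofFinite M
  haveI := Fintype.ofFinite N
  apply LinearMap.ext
  intro f
  funext p
  simp only [LinearMap.comp_apply, matLin_apply]
  simp only [finsum_eq_sum_of_fintype]
  simp only [Finset.sum_mul, Finset.mul_sum]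
  rw [Finset.sum_comm]
  exact Finset.sum_congr rfl fun n _ => Finset.sum_congr rfl fun m _ => by ring

end Helpers

/-- for all `0 ≤ k ≤ l`, the diagram formed by `I_k^l`, `A_k^l`, `A_k^{l+1}`
and `I_{k+1}^{l+1}` commutes: `A_k^{l+1} ∘ I_k^l = I_{k+1}^{l+1} ∘ A_k^l`. -/
theorem IA_diagram_commutes (X : Set (ℕ → 𝔞)) (hXclosed : IsClosed X)
    (hXinv : ∀ x ∈ X, shift x ∈ X) (k l : ℕ) (hkl : k ≤ l) :
    (Amap X k (l + 1)).comp (Imap X k l) = (Imap X (k + 1) (l + 1)).comp (Amap X k l) := by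
  haveI : Finite (PastQuot X l) := pastQuot_finite X l
  haveI : Finite (PastQuot X (l + 1)) := pastQuot_finite X (l + 1)
  haveI : Finite (PastQuot X (l + 1 + 1)) := pastQuot_finite X (l + 1 + 1)
  have key : ∀ (iq : Mset X (k + 1) (l + 1 + 1)) (jq : Mset X k l),
      (∑ᶠ m : Mset X k (l + 1),
          (∑ a : 𝔞, Aent X (l + 1) (iq : PastQuot X (l + 1 + 1)) (m : PastQuot X (l + 1)) a)
            * Ient X l (m : PastQuot X (l + 1)) (jq : PastQuot X l))
      = ∑ᶠ m : Mset X (k + 1) (l + 1),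
          Ient X (l + 1) (iq : PastQuot X (l + 1 + 1)) (m : PastQuot X (l + 1))
            * (∑ a : 𝔞, Aent X l (m : PastQuot X (l + 1)) (jq : PastQuot X l) a) := by
    intro iq jq
    haveI := Fintype.ofFinite (Mset X k (l + 1) : Set (PastQuot X (l + 1)))
    haveI := Fintype.ofFinite (Mset X (k + 1) (l + 1) : Set (PastQuot X (l + 1)))
    rw [finsum_eq_sum_of_fintype, finsum_eq_sum_of_fintype]
    calc (∑ m : Mset X k (l + 1),
            (∑ a : 𝔞, Aent X (l + 1) (iq : PastQuot X (l + 1 + 1)) (m : PastQuot X (l + 1)) a)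
              * Ient X l (m : PastQuot X (l + 1)) (jq : PastQuot X l))
        = ∑ m : Mset X k (l + 1), ∑ a : 𝔞,
            Aent X (l + 1) (iq : PastQuot X (l + 1 + 1)) (m : PastQuot X (l + 1)) a
              * Ient X l (m : PastQuot X (l + 1)) (jq : PastQuot X l) := by
          exact Finset.sum_congr rfl fun m _ => Finset.sum_mul _ _ _
      _ = ∑ a : 𝔞, ∑ m : Mset X k (l + 1),
            Aent X (l + 1) (iq : PastQuot X (l + 1 + 1)) (m : PastQuot X (l + 1)) a
              * Ient X l (m : PastQuot X (l + 1)) (jq : PastQuot X l) := Finset.sum_comm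
      _ = ∑ a : 𝔞, if (lset X a (clsOf X (l + 1 + 1) (iq : PastQuot X (l + 1 + 1)))).Nonempty ∧
            lset X a (clsOf X (l + 1 + 1) (iq : PastQuot X (l + 1 + 1)))
              ⊆ clsOf X l (jq : PastQuot X l) then 1 else 0 := by
          refine Finset.sum_congr rfl fun a _ => ?_
          rw [← finsum_eq_sum_of_fintype]
          exact lhs_eval hkl _ _ jq.2 a
      _ = ∑ a : 𝔞, ∑ m : Mset X (k + 1) (l + 1),
            Ient X (l + 1) (iq : PastQuot X (l + 1 + 1)) (m : PastQuot X (l + 1))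
              * Aent X l (m : PastQuot X (l + 1)) (jq : PastQuot X l) a := by
          refine Finset.sum_congr rfl fun a _ => ?_
          rw [← finsum_eq_sum_of_fintype]
          exact (rhs_eval _ _ iq.2 a).symm
      _ = ∑ m : Mset X (k + 1) (l + 1), ∑ a : 𝔞,
            Ient X (l + 1) (iq : PastQuot X (l + 1 + 1)) (m : PastQuot X (l + 1))
              * Aent X l (m : PastQuot X (l + 1)) (jq : PastQuot X l) a := Finset.sum_comm
      _ = ∑ m : Mset X (k + 1) (l + 1),
            Ient X (l + 1) (iq : PastQuot X (l + 1 + 1)) (m : PastQuot X (l + 1))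
              * (∑ a : 𝔞, Aent X l (m : PastQuot X (l + 1)) (jq : PastQuot X l) a) := by
          exact Finset.sum_congr rfl fun m _ => (Finset.mul_sum _ _ _).symm
  show (matLin fun (i : Mset X (k + 1) (l + 1 + 1)) (j : Mset X k (l + 1)) =>
          ∑ a : 𝔞, Aent X (l + 1) (i : PastQuot X (l + 1 + 1)) (j : PastQuot X (l + 1)) a).comp
        (matLin fun (i : Mset X k (l + 1)) (j : Mset X k l) =>
          Ient X l (i : PastQuot X (l + 1)) (j : PastQuot X l))
      = (matLin fun (i : Mset X (k + 1) (l + 1 + 1)) (j : Mset X (k + 1) (l + 1)) =>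
          Ient X (l + 1) (i : PastQuot X (l + 1 + 1)) (j : PastQuot X (l + 1))).comp
        (matLin fun (i : Mset X (k + 1) (l + 1)) (j : Mset X k l) =>
          ∑ a : 𝔞, Aent X l (i : PastQuot X (l + 1)) (j : PastQuot X l) a)
  rw [matLin_comp, matLin_comp]
  exact congrArg matLin (funext fun iq => funext fun jq => key iq jq)

end
end
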